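/- With normal forms F_k(X;n) as defined, for every k and every normal form ρ ∈ F_{k+1}(X;n) there is a unique σ ∈ F_k(X;n) such that ρ ≤ σ holds in every Boolean algebra with operators satisfying cᵢ0 = 0, x ≤ cᵢx, cᵢ(x·cᵢy) = cᵢx·cᵢy, provided ρ ≠ 0 is satisfiable in some such algebra. -/

import Mathlib

universe u

/-- Index type for the normal forms `F_k(X;n)`. -/
def Ix (X ι : Type u) : ℕ → Type u
  | 0 => X → Bool
  | k + 1 => (X → Bool) × (ι × Ix X ι k → Bool)

noncomputable instance ixFintype (X ι : Type u) [Fintype X] [Fintype ι] :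
    ∀ k, Fintype (Ix X ι k)
  | 0 => by classical unfold Ix; infer_instance
  | k + 1 => by classical have := ixFintype X ι k; unfold Ix; infer_instance

/-- A literal: the element itself or its complement, according to the sign. -/
def lit {B : Type*} [BooleanAlgebra B] (b : B) : Bool → B
  | true => b
  | false => bᶜ

/-- The normal form of degree `k` with index `a`, evaluated in a Boolean algebra with
operators `c i` under the valuation `v` of the variables. -/
noncomputable def nf {X ι : Type u} {B : Type*} [Fintype X] [Fintype ι] [BooleanAlgebra B]
    (v : X → B) (c : ι → B → B) : ∀ k, Ix X ι k → B
  | 0, β => Finset.univ.inf fun x => lit (v x) (β x)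
  | k + 1, (β, γ) =>
      (Finset.univ.inf fun x => lit (v x) (β x)) ⊓
        Finset.univ.inf fun p : ι × Ix X ι k => lit (c p.1 (nf v c k p.2)) (γ p)

/- ---------- auxiliary lemmas ---------- -/

lemma nf_zero {X ι : Type u} {B : Type*} [Fintype X] [Fintype ι] [BooleanAlgebra B]
    (v : X → B) (c : ι → B → B) (β : Ix X ι 0) :
    nf v c 0 β = Finset.univ.inf fun x => lit (v x) (β x) := rfl

lemma nf_succ {X ι : Type u} {B : Type*} [Fintype X] [Fintype ι] [BooleanAlgebra B]
    (v : X → B) (c : ι → B → B) (k : ℕ) (β : X → Bool) (γ : ι × Ix X ι k → Bool) :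
    nf v c (k + 1) (β, γ) =
      (Finset.univ.inf fun x => lit (v x) (β x)) ⊓
        Finset.univ.inf fun p : ι × Ix X ι k => lit (c p.1 (nf v c k p.2)) (γ p) := rfl

lemma lit_true {B : Type*} [BooleanAlgebra B] (d : B) : lit d true = d := rfl

lemma lit_false {B : Type*} [BooleanAlgebra B] (d : B) : lit d false = dᶜ := rfl

lemma lit_inf_lit_ne {B : Type*} [BooleanAlgebra B] (d : B) {s s' : Bool} (h : s ≠ s') :
    lit d s ⊓ lit d s' = ⊥ := by
  cases s <;> cases s' <;> simp_all [lit]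

lemma disj_of_le_lit {B : Type*} [BooleanAlgebra B] {d a a' : B} {s s' : Bool}
    (ha : a ≤ lit d s) (ha' : a' ≤ lit d s') (h : s ≠ s') : a ⊓ a' = ⊥ :=
  le_bot_iff.1 ((inf_le_inf ha ha').trans (lit_inf_lit_ne d h).le)

lemma lit_cover {J : Type u} [Fintype J] {B : Type*} [BooleanAlgebra B]
    (f : J → B) (x : B)
    (h : ∀ s : J → Bool, x ⊓ Finset.univ.inf (fun j => lit (f j) (s j)) = ⊥) : x = ⊥ := by
  classical
  suffices H : ∀ u : Finset J,
      (∀ s : J → Bool, x ⊓ u.inf (fun j => lit (f j) (s j)) = ⊥) → x = ⊥ from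
    H Finset.univ h
  intro u
  induction u using Finset.induction_on with
  | empty =>
    intro h'
    simpa using h' (fun _ => true)
  | @insert j₀ u hj ih =>
    intro h'
    apply ih
    intro s
    have hu : ∀ b : Bool,
        u.inf (fun j => lit (f j) (Function.update s j₀ b j)) =
          u.inf (fun j => lit (f j) (s j)) := by
      intro b
      refine Finset.inf_congr rfl (fun j hjmem => ?_)
      rw [Function.update_of_ne (by rintro rfl; exact hj hjmem)]
    have e1 := h' (Function.update s j₀ true)
    have e2 := h' (Function.update s j₀ false)
    rw [Finset.inf_insert, hu, Function.update_self, lit_true] at e1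
    rw [Finset.inf_insert, hu, Function.update_self, lit_false] at e2
    calc x ⊓ u.inf (fun j => lit (f j) (s j))
        = x ⊓ ((f j₀ ⊔ (f j₀)ᶜ) ⊓ u.inf (fun j => lit (f j) (s j))) := by
          rw [sup_compl_eq_top, top_inf_eq]
      _ = (x ⊓ (f j₀ ⊓ u.inf (fun j => lit (f j) (s j)))) ⊔
            (x ⊓ ((f j₀)ᶜ ⊓ u.inf (fun j => lit (f j) (s j)))) := by
          rw [inf_sup_right, inf_sup_left]
      _ = ⊥ := by rw [e1, e2, sup_idem]

lemma nf_cover {X ι : Type u} [Fintype X] [Fintype ι] {B : Type*} [BooleanAlgebra B]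
    (v : X → B) (c : ι → B → B) (k : ℕ) (x : B)
    (h : ∀ t : Ix X ι k, x ⊓ nf v c k t = ⊥) : x = ⊥ := by
  cases k with
  | zero =>
    refine lit_cover v x (fun s => ?_)
    exact h s
  | succ m =>
    refine lit_cover v x (fun β => ?_)
    refine lit_cover (fun p : ι × Ix X ι m => c p.1 (nf v c m p.2))
      (x ⊓ Finset.univ.inf (fun x' => lit (v x') (β x'))) (fun γ => ?_)
    have := h (β, γ)
    rw [nf_succ] at this
    rw [inf_assoc]
    exact this

lemma nf_disj {X ι : Type u} [Fintype X] [Fintype ι] {B : Type*} [BooleanAlgebra B]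
    (v : X → B) (c : ι → B → B) :
    ∀ (k : ℕ) (b b' : Ix X ι k), b ≠ b' → nf v c k b ⊓ nf v c k b' = ⊥ := by
  intro k
  cases k with
  | zero =>
    intro b b' hne
    obtain ⟨x₀, hx⟩ := Function.ne_iff.1 hne
    refine disj_of_le_lit (d := v x₀) ?_ ?_ hx
    · rw [nf_zero]; exact Finset.inf_le (Finset.mem_univ x₀)
    · rw [nf_zero]; exact Finset.inf_le (Finset.mem_univ x₀)
  | succ m =>
    rintro ⟨β, γ⟩ ⟨β', γ'⟩ hne
    by_cases hβ : β = β'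
    · have hγ : γ ≠ γ' := by
        intro hγ; exact hne (by rw [hβ, hγ])
      obtain ⟨p₀, hp⟩ := Function.ne_iff.1 hγ
      refine disj_of_le_lit (d := c p₀.1 (nf v c m p₀.2)) ?_ ?_ hp
      · rw [nf_succ]; exact inf_le_right.trans (Finset.inf_le (Finset.mem_univ p₀))
      · rw [nf_succ]; exact inf_le_right.trans (Finset.inf_le (Finset.mem_univ p₀))
    · obtain ⟨x₀, hx⟩ := Function.ne_iff.1 hβ
      refine disj_of_le_lit (d := v x₀) ?_ ?_ hx
      · rw [nf_succ]; exact inf_le_left.trans (Finset.inf_le (Finset.mem_univ x₀))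
      · rw [nf_succ]; exact inf_le_left.trans (Finset.inf_le (Finset.mem_univ x₀))

lemma c_mono {B : Type*} [BooleanAlgebra B] {c : B → B}
    (h1 : ∀ x, x ≤ c x) (h2 : ∀ x y, c (x ⊓ c y) = c x ⊓ c y)
    {x y : B} (hxy : x ≤ y) : c x ≤ c y := by
  have hx : x ⊓ c y = x := inf_eq_left.2 (hxy.trans (h1 y))
  calc c x = c (x ⊓ c y) := by rw [hx]
    _ = c x ⊓ c y := h2 x y
    _ ≤ c y := inf_le_right

lemma c_idem_le {B : Type*} [BooleanAlgebra B] {c : B → B}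
    (h2 : ∀ x y, c (x ⊓ c y) = c x ⊓ c y) (y : B) : c (c y) ≤ c y := by
  have := h2 ⊤ y
  rw [top_inf_eq] at this
  rw [this]
  exact inf_le_right

/-- If a normal form `ρ` of degree `k+1` is satisfiable in some algebra of the variety,
then there is a unique normal form `σ` of degree `k` such that `ρ ≤ σ` holds in every
Boolean algebra with operators satisfying the three axioms. -/
theorem stmt_15 {X ι : Type u} [Fintype X] [Fintype ι]
    (hn : 2 ≤ Fintype.card ι) (k : ℕ) (a : Ix X ι (k + 1))
    (hsat : ∃ (B : Type u) (instB : BooleanAlgebra B) (v : X → B) (c : ι → B → B),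
      (∀ i, c i ⊥ = ⊥) ∧ (∀ i x, x ≤ c i x) ∧
      (∀ i x y, c i (x ⊓ c i y) = c i x ⊓ c i y) ∧
      @nf X ι B _ _ instB v c (k + 1) a ≠ ⊥) :
    ∃! b : Ix X ι k,
      ∀ (B : Type u) [instB : BooleanAlgebra B] (v : X → B) (c : ι → B → B),
        (∀ i, c i ⊥ = ⊥) → (∀ i x, x ≤ c i x) →
        (∀ i x y, c i (x ⊓ c i y) = c i x ⊓ c i y) →
        nf v c (k + 1) a ≤ nf v c k b := by
  classical
  obtain ⟨β, γ⟩ := a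
  have key : ∃ b : Ix X ι k,
      ∀ (B : Type u) [instB : BooleanAlgebra B] (v : X → B) (c : ι → B → B),
        (∀ i, c i ⊥ = ⊥) → (∀ i x, x ≤ c i x) →
        (∀ i x y, c i (x ⊓ c i y) = c i x ⊓ c i y) →
        nf v c (k + 1) (β, γ) ≤ nf v c k b := by
    cases k with
    | zero =>
      refine ⟨β, ?_⟩
      intro B instB v c h0 h1 h2
      rw [nf_succ]
      exact inf_le_left
    | succ m =>
      refine ⟨(β, fun q : ι × Ix X ι m =>
        if ∃ τ : Ix X ι (m + 1), γ (q.1, τ) = true ∧ τ.2 q = true then true else false), ?_⟩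
      intro B instB v c h0 h1 h2
      rw [nf_succ, nf_succ]
      refine le_inf inf_le_left (Finset.le_inf ?_)
      rintro ⟨i, σ⟩ -
      dsimp only
      set ρ : B := (Finset.univ.inf fun x => lit (v x) (β x)) ⊓
        Finset.univ.inf (fun p : ι × Ix X ι (m + 1) =>
          lit (c p.1 (nf v c (m + 1) p.2)) (γ p)) with hρ
      have hρle : ∀ τ : Ix X ι (m + 1), ρ ≤ lit (c i (nf v c (m + 1) τ)) (γ (i, τ)) := by
        intro τ
        exact inf_le_right.trans (Finset.inf_le (Finset.mem_univ (i, τ)))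
      by_cases hE : ∃ τ : Ix X ι (m + 1), γ (i, τ) = true ∧ τ.2 (i, σ) = true
      · rw [if_pos hE, lit_true]
        obtain ⟨τ, hγτ, hτ2⟩ := hE
        obtain ⟨βτ, γτ⟩ := τ
        have hτ2 : γτ (i, σ) = true := hτ2
        have s1 : ρ ≤ c i (nf v c (m + 1) (βτ, γτ)) := by
          have := hρle (βτ, γτ)
          rw [hγτ] at this
          exact this
        have s2 : nf v c (m + 1) (βτ, γτ) ≤ c i (nf v c m σ) := by
          rw [nf_succ]
          have : (Finset.univ.inf fun p : ι × Ix X ι m =>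
              lit (c p.1 (nf v c m p.2)) (γτ p)) ≤ lit (c i (nf v c m σ)) (γτ (i, σ)) :=
            Finset.inf_le (Finset.mem_univ (i, σ))
          rw [hτ2] at this
          exact inf_le_right.trans this
        calc ρ ≤ c i (nf v c (m + 1) (βτ, γτ)) := s1
          _ ≤ c i (c i (nf v c m σ)) := c_mono (h1 i) (h2 i) s2
          _ ≤ c i (nf v c m σ) := c_idem_le (h2 i) _
        -- goal: ρ ≤ lit (c i (nf v c m σ)) true which is defeq
      · rw [if_neg hE, lit_false]
        -- goal : ρ ≤ (c i (nf v c m σ))ᶜ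
        by_cases hS : ∃ τ₀ : Ix X ι (m + 1), γ (i, τ₀) = true
        · obtain ⟨τ₀, hγτ₀⟩ := hS
          have hτ₀2 : τ₀.2 (i, σ) = false := by
            rcases Bool.eq_false_or_eq_true (τ₀.2 (i, σ)) with h | h
            · exact absurd ⟨τ₀, hγτ₀, h⟩ hE
            · exact h
          obtain ⟨βτ, γτ⟩ := τ₀
          have hτ₀2 : γτ (i, σ) = false := hτ₀2
          have A : ρ ≤ c i (nf v c (m + 1) (βτ, γτ)) := by
            have := hρle (βτ, γτ)
            rw [hγτ₀] at this
            exact this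
          have Bd : nf v c (m + 1) (βτ, γτ) ⊓ c i (nf v c m σ) = ⊥ := by
            have : nf v c (m + 1) (βτ, γτ) ≤ (c i (nf v c m σ))ᶜ := by
              rw [nf_succ]
              have h' : (Finset.univ.inf fun p : ι × Ix X ι m =>
                  lit (c p.1 (nf v c m p.2)) (γτ p)) ≤ lit (c i (nf v c m σ)) (γτ (i, σ)) :=
                Finset.inf_le (Finset.mem_univ (i, σ))
              rw [hτ₀2] at h'
              exact inf_le_right.trans h'
            exact le_bot_iff.1 ((inf_le_inf this le_rfl).trans compl_inf_eq_bot.le)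
          have : ρ ⊓ c i (nf v c m σ) = ⊥ := by
            have step : ρ ⊓ c i (nf v c m σ) ≤
                c i (nf v c (m + 1) (βτ, γτ)) ⊓ c i (nf v c m σ) :=
              inf_le_inf A le_rfl
            rw [← h2 i, Bd, h0 i] at step
            exact le_bot_iff.1 step
          exact (le_compl_iff_disjoint_right).2 (disjoint_iff.2 this)
        · -- all γ (i, τ) = false : then ρ = ⊥
          have hAll : ∀ τ : Ix X ι (m + 1), γ (i, τ) = false := by
            intro τ
            rcases Bool.eq_false_or_eq_true (γ (i, τ)) with h | h
            · exact absurd ⟨τ, h⟩ hS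
            · exact h
          have hbot : ρ = ⊥ := by
            refine nf_cover v c (m + 1) ρ (fun t => ?_)
            have h1' : ρ ≤ (c i (nf v c (m + 1) t))ᶜ := by
              have := hρle t
              rw [hAll t] at this
              exact this
            have h2' : nf v c (m + 1) t ≤ c i (nf v c (m + 1) t) := h1 i _
            exact le_bot_iff.1 ((inf_le_inf h1' h2').trans compl_inf_eq_bot.le)
          rw [hbot]
          exact bot_le
  obtain ⟨b, hex⟩ := key
  refine ⟨b, hex, ?_⟩
  intro b' hb'
  by_contra hne
  obtain ⟨Bw, instBw, vw, cw, h0w, h1w, h2w, hnew⟩ := hsat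
  have d := nf_disj vw cw k b' b hne
  have l1 := hb' Bw vw cw h0w h1w h2w
  have l2 := hex Bw vw cw h0w h1w h2w
  exact hnew (le_bot_iff.1 (by
    calc nf vw cw (k + 1) (β, γ) ≤ nf vw cw k b' ⊓ nf vw cw k b := le_inf l1 l2
      _ = ⊥ := d))
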